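/- Fix integers b ≥ 2, s, m ≥ 1 and let 𝒫 be the digital net over ℤ_b in G^s with generating matrices C_1, …, C_s ∈ ℤ_b^{ℕ×m}. Then the b-adic antithetic sampling 𝒫_bant of 𝒫 coincides, as a multiset of b^{m+1} points of G^s, with the digital net over ℤ_b in G^s with generating matrices D_1, …, D_s ∈ ℤ_b^{ℕ×(m+1)}, where D_j is obtained from C_j by appending the all-ones column (1,1,…)ᵀ as the (m+1)-st column. -/

import Mathlib

open MeasureTheory

noncomputable section

/-- the `i`-th `b`-adic digit of the natural number `k`. -/
def bdig (b k i : ℕ) : ℕ := k / b ^ i % b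

/-- the `k`-th `b`-adic character `χ_k` on `G = ∏_{i ≥ 1} ℤ_b`,
`χ_k(z) = ω_b^{κ_0 ζ_1 + κ_1 ζ_2 + ⋯}` where `ω_b = exp(2π√-1/b)`. -/
def gchar (b k : ℕ) (z : ℕ → ZMod b) : ℂ :=
  Complex.exp (2 * Real.pi * Complex.I / b) ^ ∑ i ∈ Finset.range k, bdig b k i * (z i).val

/-- the `𝐤`-th character on `G^s`, `χ_𝐤(𝐳) = ∏_j χ_{k_j}(z_j)`. -/
def gcharV (b : ℕ) {s : ℕ} (k : Fin s → ℕ) (z : Fin s → ℕ → ZMod b) : ℂ :=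
  ∏ j, gchar b (k j) (z j)

/-- the projection map `π : G → [0,1]`, `π(z) = ∑_{i ≥ 1} ζ_i b^{-i}`. -/
def gproj (b : ℕ) (z : ℕ → ZMod b) : ℝ := ∑' i, (z i).val / (b : ℝ) ^ (i + 1)

/-- the section map `σ : [0,1] → G`, sending `x` to its sequence of `b`-adic digits
(`ξ_i = ⌊b^i x⌋ mod b` for `x < 1`, and all digits `b - 1` for `x = 1`). -/
def gsect (b : ℕ) (x : ℝ) : ℕ → ZMod b := fun i =>
  if x < 1 then ((⌊(b : ℝ) ^ (i + 1) * x⌋ : ℤ) : ZMod b) else -1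

/-- the equi-probability (uniform) measure on `ZMod b`. -/
def unifZMod (b : ℕ) : Measure (ZMod b) := (b : ENNReal)⁻¹ • Measure.count

/-- `μ` is the product probability measure `μ̃` on `G = ∏_{i ≥ 1} ℤ_b` induced by the
uniform measure on `ℤ_b`, characterized as the projective limit of the finite products
of the uniform measure on `ZMod b`. -/
def IsProductUniform (b : ℕ) (μ : Measure (ℕ → ZMod b)) : Prop :=
  IsProjectiveLimit μ (fun J : Finset ℕ => Measure.pi (fun _ : J => unifZMod b))

/-- the `h`-th point `𝐳_h` of the digital net over `ℤ_b` in `G^s` with generating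
matrices `C j : ℕ → Fin m → ZMod b` (`h` with `b`-adic digits `η_0, …, η_{m-1}`,
`z_{h,j}ᵀ = C_j ⬝ (η_0, …, η_{m-1})ᵀ`). -/
def digNet (b : ℕ) {m s : ℕ} (C : Fin s → ℕ → Fin m → ZMod b) (h : ℕ) :
    Fin s → ℕ → ZMod b :=
  fun j i => ∑ r : Fin m, ((bdig b h r : ℕ) : ZMod b) * C j i r

/-- the product `k⃗ C` of the (finitely supported) `b`-adic digit vector
`k⃗ = (κ_0, κ_1, …)` of `k` with the matrix `C : ℕ → Fin m → ZMod b`. -/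
def digitVecMul (b : ℕ) {m : ℕ} (k : ℕ) (C : ℕ → Fin m → ZMod b) : Fin m → ZMod b :=
  fun r => ∑ i ∈ Finset.range k, ((bdig b k i : ℕ) : ZMod b) * C i r

/-- the dual net `𝒫^⊥ = {𝐤 ∈ ℕ^s : k⃗_1 C_1 ⊕ ⋯ ⊕ k⃗_s C_s = 0 ∈ ℤ_b^m}` of the digital
net with generating matrices `C j`. -/
def dualNet (b : ℕ) {m s : ℕ} (C : Fin s → ℕ → Fin m → ZMod b) : Set (Fin s → ℕ) :=
  {k | ∑ j, digitVecMul b (k j) (C j) = 0}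

/-- the sum-of-digits function `δ : ℕ → ℤ_b`, `δ(k) = ∑_i κ_i mod b`. -/
def ddelta (b k : ℕ) : ZMod b := ∑ i ∈ Finset.range k, ((bdig b k i : ℕ) : ZMod b)

/-- `δ(𝐤) = ∑_{j} δ(k_j) mod b` for a vector `𝐤 ∈ ℕ^s`. -/
def ddeltaV (b : ℕ) {s : ℕ} (k : Fin s → ℕ) : ZMod b := ∑ j, ddelta b (k j)

lemma bdig_low (b m l h r : ℕ) (hb : 0 < b) (hr : r < m) :
    bdig b (l * b ^ m + h) r = bdig b h r := by
  unfold bdig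
  have h1 : l * b ^ m = l * b ^ (m - r - 1) * b * b ^ r := by
    rw [mul_assoc, mul_assoc, ← pow_succ', ← pow_add]
    congr 2
    omega
  rw [h1, Nat.add_comm, Nat.add_mul_div_right _ _ (pow_pos hb r),
    Nat.add_mul_mod_self_right]

lemma bdig_high (b m l h : ℕ) (hl : l < b) (hh : h < b ^ m) :
    bdig b (l * b ^ m + h) m = l := by
  unfold bdig
  rw [Nat.add_comm, Nat.add_mul_div_right _ _ (pow_pos (show 0 < b by omega) m),
    Nat.div_eq_of_lt hh, Nat.zero_add, Nat.mod_eq_of_lt hl]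

lemma mem_sprod {α β : Type*} {s : Multiset α} {t : Multiset β} {p : α × β} :
    p ∈ s ×ˢ t ↔ p.1 ∈ s ∧ p.2 ∈ t := by
  dsimp only [SProd.sprod]; exact Multiset.mem_product

lemma range_split (b m : ℕ) :
    Multiset.range (b ^ (m + 1)) =
      ((Multiset.range b) ×ˢ (Multiset.range (b ^ m))).map (fun p => p.1 * b ^ m + p.2) := by
  rcases Nat.eq_zero_or_pos b with hb | hb
  · subst hb; simp
  have hbm : 0 < b ^ m := pow_pos hb m
  have d1 : (Multiset.range (b ^ (m + 1))).Nodup := Multiset.nodup_range _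
  have dp : ((Multiset.range b) ×ˢ (Multiset.range (b ^ m))).Nodup :=
    Multiset.Nodup.product (Multiset.nodup_range _) (Multiset.nodup_range _)
  have d2 : (((Multiset.range b) ×ˢ (Multiset.range (b ^ m))).map
      (fun p => p.1 * b ^ m + p.2)).Nodup := by
    refine Multiset.Nodup.map_on ?_ dp
    intro x hx y hy hxy
    simp only [mem_sprod, Multiset.mem_range] at hx hy
    have hx2 := hx.2
    have hy2 := hy.2
    have h1 : x.1 = y.1 := by
      have hx1 : (x.1 * b ^ m + x.2) / b ^ m = x.1 := by
        rw [Nat.mul_comm, Nat.mul_add_div hbm, Nat.div_eq_of_lt hx2, Nat.add_zero]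
      have hy1 : (y.1 * b ^ m + y.2) / b ^ m = y.1 := by
        rw [Nat.mul_comm, Nat.mul_add_div hbm, Nat.div_eq_of_lt hy2, Nat.add_zero]
      rw [← hx1, ← hy1, hxy]
    have h2 : x.2 = y.2 := by
      have h3 := hxy; rw [h1] at h3; omega
    exact Prod.ext h1 h2
  rw [Multiset.Nodup.ext d1 d2]
  intro a
  rw [Multiset.mem_range, Multiset.mem_map]
  constructor
  · intro ha
    refine ⟨(a / b ^ m, a % b ^ m), ?_, ?_⟩
    · simp only [mem_sprod, Multiset.mem_range]
      constructor
      · rw [pow_succ] at ha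
        exact Nat.div_lt_of_lt_mul ha
      · exact Nat.mod_lt _ hbm
    · show a / b ^ m * b ^ m + a % b ^ m = a
      rw [Nat.mul_comm]; exact Nat.div_add_mod a (b ^ m)
  · rintro ⟨p, hp, rfl⟩
    simp only [mem_sprod, Multiset.mem_range] at hp
    calc p.1 * b ^ m + p.2 < p.1 * b ^ m + b ^ m := by omega
      _ = (p.1 + 1) * b ^ m := by ring
      _ ≤ b * b ^ m := Nat.mul_le_mul_right _ (by omega)
      _ = b ^ (m + 1) := by ring

/-- the `b`-adic antithetic sampling `𝒫_bant = (𝐳_h ⊕ 𝐞_l)_{0 ≤ h < b^m, l ∈ ℤ_b}`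
of the digital net `𝒫` with generating matrices `C_1, …, C_s ∈ ℤ_b^{ℕ×m}` coincides, as a
multiset of `b^{m+1}` points of `G^s`, with the digital net with generating matrices
`D_j = (C_j | (1,1,…)ᵀ) ∈ ℤ_b^{ℕ×(m+1)}`. -/
theorem antithetic_eq_digNet (b : ℕ) (hb : 2 ≤ b) (s m : ℕ) (hs : 1 ≤ s) (hm : 1 ≤ m)
    (C : Fin s → ℕ → Fin m → ZMod b)
    (D : Fin s → ℕ → Fin (m + 1) → ZMod b)
    (hD : ∀ j i, D j i = Fin.snoc (C j i) 1) :
    (Multiset.range (b ^ (m + 1))).map (fun h => digNet b D h) =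
      ((Multiset.range b) ×ˢ (Multiset.range (b ^ m))).map
        (fun p => fun j i => digNet b C p.2 j i + ((p.1 : ℕ) : ZMod b)) := by
  rw [range_split, Multiset.map_map]
  refine Multiset.map_congr rfl ?_
  intro p hp
  simp only [mem_sprod, Multiset.mem_range] at hp
  obtain ⟨hl, hh⟩ := hp
  funext j i
  simp only [Function.comp_apply, digNet]
  rw [Fin.sum_univ_castSucc]
  congr 1
  · refine Finset.sum_congr rfl ?_
    intro r _
    rw [hD, Fin.snoc_castSucc, Fin.coe_castSucc,
      bdig_low b m p.1 p.2 r (by omega) r.isLt]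
  · rw [hD, Fin.snoc_last, Fin.val_last, bdig_high b m p.1 p.2 hl hh, mul_one]
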